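/- If H and K are disjoint Gδ subsets of Cantor space 2^ℕ, then there exists a set S ⊆ 2^ℕ which is both Fσ and Gδ such that H ⊆ S and K ∩ S = ∅ (Hausdorff separation of disjoint Gδ sets by a set in the difference hierarchy of closed sets). -/

import Mathlib

open Set

instance : Filter.IsCountablyGenerated (uniformity Bool) :=
  (show uniformity Bool = Filter.principal SetRel.id from rfl) ▸
    Filter.isCountablyGenerated_principal _

/-- An open set in Cantor space is a countable union of closed sets. -/
lemma open_eq_iUnion_closed {U : Set (ℕ → Bool)} (hU : IsOpen U) :
    ∃ C : ℕ → Set (ℕ → Bool), (∀ n, IsClosed (C n)) ∧ U = ⋃ n, C n := by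
  have h : IsGδ Uᶜ := (isClosed_compl_iff.mpr hU).isGδ
  obtain ⟨V, hVo, hV⟩ := h.eq_iInter_nat
  refine ⟨fun n => (V n)ᶜ, fun n => (hVo n).isClosed_compl, ?_⟩
  rw [← compl_compl U, hV, compl_iInter]

/-- Hausdorff separation: disjoint Gδ subsets of Cantor space `2^ℕ` can be
separated by a set that is simultaneously Fσ and Gδ. -/
theorem gdelta_separation (H K : Set (ℕ → Bool)) (hH : IsGδ H) (hK : IsGδ K)
    (hdisj : Disjoint H K) :
    ∃ S : Set (ℕ → Bool),
      (∃ C : ℕ → Set (ℕ → Bool), (∀ n, IsClosed (C n)) ∧ S = ⋃ n, C n) ∧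
      IsGδ S ∧ H ⊆ S ∧ K ∩ S = ∅ := by
  classical
  obtain ⟨U, hUo, hU⟩ := hH.eq_iInter_nat
  obtain ⟨V, hVo, hV⟩ := hK.eq_iInter_nat
  set F : ℕ → Set (ℕ → Bool) := fun n => (U n)ᶜ with hF
  set G : ℕ → Set (ℕ → Bool) := fun n => (V n)ᶜ with hG
  have hFc : ∀ n, IsClosed (F n) := fun n => (hUo n).isClosed_compl
  have hGc : ∀ n, IsClosed (G n) := fun n => (hVo n).isClosed_compl
  have hHc : Hᶜ = ⋃ n, F n := by rw [hU, compl_iInter]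
  have hKc : Kᶜ = ⋃ n, G n := by rw [hV, compl_iInter]
  -- the "obstruction" sets, closed finite unions
  set W : ℕ → Set (ℕ → Bool) := fun n => ⋃ m ∈ Iio n, G m with hW
  set P : ℕ → Set (ℕ → Bool) := fun n => ⋃ m ∈ Iic n, F m with hP
  have hWc : ∀ n, IsClosed (W n) :=
    fun n => (finite_Iio n).isClosed_biUnion (fun m _ => hGc m)
  have hPc : ∀ n, IsClosed (P n) :=
    fun n => (finite_Iic n).isClosed_biUnion (fun m _ => hFc m)
  -- reduced sets
  set A : Set (ℕ → Bool) := ⋃ n, (F n ∩ (W n)ᶜ) with hA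
  set B : Set (ℕ → Bool) := ⋃ n, (G n ∩ (P n)ᶜ) with hB
  have hABdisj : A ∩ B = ∅ := by
    rw [eq_empty_iff_forall_notMem]
    rintro x ⟨hxA, hxB⟩
    obtain ⟨n, hxF, hxW⟩ := mem_iUnion.mp hxA
    obtain ⟨k, hxG, hxP⟩ := mem_iUnion.mp hxB
    rcases lt_or_ge k n with h | h
    · exact hxW (mem_biUnion (mem_Iio.mpr h) hxG)
    · exact hxP (mem_biUnion (mem_Iic.mpr h) hxF)
  have hABcover : A ∪ B = univ := by
    ext x
    simp only [mem_univ, iff_true, mem_union]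
    have hx : x ∈ Hᶜ ∪ Kᶜ := by
      rcases em (x ∈ H) with h | h
      · right
        intro hxK
        exact (notMem_empty x) (hdisj.inter_eq ▸ mem_inter h hxK)
      · left; exact h
    have hx' : ∃ n, x ∈ F n ∪ G n := by
      rcases hx with hx | hx
      · rw [hHc] at hx; obtain ⟨n, hn⟩ := mem_iUnion.mp hx; exact ⟨n, Or.inl hn⟩
      · rw [hKc] at hx; obtain ⟨n, hn⟩ := mem_iUnion.mp hx; exact ⟨n, Or.inr hn⟩
    set n := Nat.find hx' with hn
    have hmin : ∀ m < n, x ∉ F m ∪ G m := fun m hm => Nat.find_min hx' hm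
    by_cases hxF : x ∈ F n
    · left
      refine mem_iUnion.mpr ⟨n, hxF, ?_⟩
      intro hxW
      obtain ⟨m, hm⟩ := mem_iUnion.mp hxW
      obtain ⟨hmn, hxG⟩ := mem_iUnion.mp hm
      exact hmin m hmn (Or.inr hxG)
    · right
      have hxG : x ∈ G n := (Nat.find_spec hx').resolve_left hxF
      refine mem_iUnion.mpr ⟨n, hxG, ?_⟩
      intro hxP
      obtain ⟨m, hm⟩ := mem_iUnion.mp hxP
      obtain ⟨hmn, hxFm⟩ := mem_iUnion.mp hm
      rcases lt_or_eq_of_le (mem_Iic.mp hmn) with h | h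
      · exact hmin m h (Or.inl hxFm)
      · exact hxF (h ▸ hxFm)
  have hBA : B = Aᶜ := by
    ext x
    constructor
    · intro hxB hxA
      exact absurd (mem_inter hxA hxB) (by rw [hABdisj]; exact notMem_empty x)
    · intro hxA
      rcases (by rw [hABcover]; exact mem_univ x : x ∈ A ∪ B) with h | h
      · exact absurd h hxA
      · exact h
  refine ⟨B, ?_, ?_, ?_, ?_⟩
  · -- B is Fσ
    have hC : ∀ n, ∃ C : ℕ → Set (ℕ → Bool),
        (∀ j, IsClosed (C j)) ∧ (P n)ᶜ = ⋃ j, C j :=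
      fun n => open_eq_iUnion_closed (hPc n).isOpen_compl
    choose C hCc hCe using hC
    set e : ℕ ≃ ℕ × ℕ := (Denumerable.eqv (ℕ × ℕ)).symm
    refine ⟨fun k => G (e k).1 ∩ C (e k).1 (e k).2,
      fun k => (hGc _).inter (hCc _ _), ?_⟩
    have : B = ⋃ p : ℕ × ℕ, G p.1 ∩ C p.1 p.2 := by
      rw [hB]
      ext x
      simp only [mem_iUnion, mem_inter_iff]
      constructor
      · rintro ⟨n, hxG, hxP⟩
        rw [hCe n] at hxP
        obtain ⟨j, hj⟩ := mem_iUnion.mp hxP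
        exact ⟨(n, j), hxG, hj⟩
      · rintro ⟨⟨n, j⟩, hxG, hxC⟩
        exact ⟨n, hxG, by rw [hCe n]; exact mem_iUnion.mpr ⟨j, hxC⟩⟩
    rw [this, ← e.surjective.iUnion_comp (fun p => G p.1 ∩ C p.1 p.2)]
  · -- B is Gδ
    rw [hBA, hA, compl_iUnion]
    refine IsGδ.iInter fun n => ?_
    simp only [compl_inter, hF, compl_compl]
    exact ((hUo n).isGδ).union (hWc n).isGδ
  · -- H ⊆ B
    intro x hxH
    rw [hBA]
    intro hxA
    obtain ⟨n, hn⟩ := mem_iUnion.mp hxA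
    have : x ∈ Hᶜ := by rw [hHc]; exact mem_iUnion.mpr ⟨n, hn.1⟩
    exact this hxH
  · -- K ∩ B = ∅
    ext x
    simp only [mem_inter_iff, mem_empty_iff_false, iff_false, not_and]
    intro hxK hxB
    obtain ⟨n, hn⟩ := mem_iUnion.mp hxB
    have : x ∈ Kᶜ := by rw [hKc]; exact mem_iUnion.mpr ⟨n, hn.1⟩
    exact this hxK
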